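/- arXiv:1308.4629 — 4 statements merged into one kernel-verified Lean document; each statement's English description precedes it below -/
import Mathlib

section
/- (Quantum Recurrence Theorem, ℓ² model.) Let E : ℕ → ℝ be a sequence of real numbers and for t ∈ ℝ let U_t denote the time-evolution map on ℓ²(ℕ, ℂ) given by (U_t c)ₙ = exp(-i·Eₙ·t)·cₙ. Then for every c ∈ ℓ²(ℕ, ℂ), every δ > 0, and every τ > 0, there exists a time T > τ such that ‖c - U_T c‖ < δ. -/
open scoped ENNReal

/-- The time-evolution map `U_t` on `ℓ²(ℕ, ℂ)`: `(U_t c)ₙ = exp(-i·Eₙ·t)·cₙ`. -/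
noncomputable def timeEvol (E : ℕ → ℝ) (t : ℝ) (c : lp (fun _ : ℕ => ℂ) 2) :
    lp (fun _ : ℕ => ℂ) 2 :=
  ⟨fun n => Complex.exp ((-(E n * t) : ℝ) * Complex.I) * (c : ∀ _ : ℕ, ℂ) n, by
    apply memℓp_gen
    have hs : Summable fun n : ℕ => ‖(c : ∀ _ : ℕ, ℂ) n‖ ^ (2 : ℝ≥0∞).toReal :=
      (lp.memℓp c).summable (by norm_num)
    refine hs.congr fun n => ?_
    simp [norm_mul, Complex.norm_exp]⟩

lemma norm_exp_real_mul_I (r : ℝ) : ‖Complex.exp ((r : ℝ) * Complex.I)‖ = 1 := by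
  simp [Complex.norm_exp]

/-- Simultaneous recurrence for finitely many rotations. -/
lemma recur (N : ℕ) (a : ℕ → ℝ) (ε : ℝ) (hε : 0 < ε) :
    ∃ m : ℕ, 1 ≤ m ∧ ∀ n < N, ‖Complex.exp ((a n * m : ℝ) * Complex.I) - 1‖ < ε := by
  set f : ℕ → (Fin N → ℂ) := fun k n => Complex.exp ((a n * k : ℝ) * Complex.I) with hf
  have hmem : ∀ k, f k ∈ Metric.closedBall (0 : Fin N → ℂ) 1 := by
    intro k
    rw [Metric.mem_closedBall, dist_zero_right]
    refine (pi_norm_le_iff_of_nonneg zero_le_one).2 fun n => ?_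
    rw [hf]
    exact le_of_eq (norm_exp_real_mul_I _)
  obtain ⟨x, -, φ, hφ, hlim⟩ :=
    (isCompact_closedBall (0 : Fin N → ℂ) 1).tendsto_subseq hmem
  obtain ⟨K, hK⟩ := Metric.tendsto_atTop.1 hlim (ε / 2) (by positivity)
  have hkl : φ K < φ (K + 1) := hφ (Nat.lt_succ_self K)
  have hdist : dist (f (φ K)) (f (φ (K + 1))) < ε := by
    calc dist (f (φ K)) (f (φ (K + 1)))
        ≤ dist (f (φ K)) x + dist (f (φ (K + 1))) x := dist_triangle_right _ _ _
      _ < ε / 2 + ε / 2 := add_lt_add (hK K le_rfl) (hK (K + 1) (Nat.le_succ K))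
      _ = ε := by ring
  set k := φ K
  set l := φ (K + 1)
  refine ⟨l - k, by omega, fun n hn => ?_⟩
  set m := l - k with hm
  have hcast : (a n * l : ℝ) = a n * m + a n * k := by
    have : (l : ℝ) = (m : ℝ) + (k : ℝ) := by
      have : l = m + k := by omega
      exact_mod_cast congrArg (Nat.cast : ℕ → ℝ) this
    rw [this]; ring
  have key : Complex.exp ((a n * l : ℝ) * Complex.I) - Complex.exp ((a n * k : ℝ) * Complex.I)
      = Complex.exp ((a n * k : ℝ) * Complex.I)
        * (Complex.exp ((a n * m : ℝ) * Complex.I) - 1) := by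
    rw [mul_sub, mul_one, ← Complex.exp_add, ← add_mul, ← Complex.ofReal_add]
    congr 2
    rw [hcast]; ring
  have h1 : ‖Complex.exp ((a n * m : ℝ) * Complex.I) - 1‖
      = ‖Complex.exp ((a n * l : ℝ) * Complex.I) - Complex.exp ((a n * k : ℝ) * Complex.I)‖ := by
    rw [key, norm_mul, norm_exp_real_mul_I, one_mul]
  rw [h1]
  have hle := dist_le_pi_dist (f k) (f l) ⟨n, hn⟩
  have : dist (f k ⟨n, hn⟩) (f l ⟨n, hn⟩)
      = ‖Complex.exp ((a n * l : ℝ) * Complex.I) - Complex.exp ((a n * k : ℝ) * Complex.I)‖ := by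
    rw [dist_eq_norm, norm_sub_rev]
  rw [this] at hle
  exact lt_of_le_of_lt hle hdist

/-- Quantum Recurrence Theorem in the ℓ² model. -/
theorem quantum_recurrence (E : ℕ → ℝ) (c : lp (fun _ : ℕ => ℂ) 2) (δ τ : ℝ)
    (hδ : 0 < δ) (hτ : 0 < τ) :
    ∃ T : ℝ, T > τ ∧ ‖c - timeEvol E T c‖ < δ := by
  -- summability of the squared norms
  have hsum : Summable fun n : ℕ => ‖(c : ∀ _ : ℕ, ℂ) n‖ ^ 2 := by
    have := (lp.memℓp c).summable (p := 2) (by norm_num)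
    refine this.congr fun n => ?_
    norm_num
  set S := ∑' n : ℕ, ‖(c : ∀ _ : ℕ, ℂ) n‖ ^ 2 with hS
  have hS0 : 0 ≤ S := tsum_nonneg fun n => sq_nonneg _
  -- choose N with small tail
  have htail : Filter.Tendsto (fun i => ∑' n : ℕ, ‖(c : ∀ _ : ℕ, ℂ) (n + i)‖ ^ 2)
      Filter.atTop (nhds 0) :=
    tendsto_sum_nat_add (fun n : ℕ => ‖(c : ∀ _ : ℕ, ℂ) n‖ ^ 2)
  obtain ⟨N, hN⟩ := (Filter.tendsto_atTop'.1 htail (Set.Iio (δ ^ 2 / 8))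
    (Iio_mem_nhds (by positivity)))
  have hNlt : ∑' n : ℕ, ‖(c : ∀ _ : ℕ, ℂ) (n + N)‖ ^ 2 < δ ^ 2 / 8 := hN N le_rfl
  -- choose ε
  set ε : ℝ := δ / (2 * Real.sqrt (S + 1)) with hε
  have hSpos : 0 < Real.sqrt (S + 1) := Real.sqrt_pos.2 (by linarith)
  have hεpos : 0 < ε := by positivity
  have hε2 : ε ^ 2 * S ≤ δ ^ 2 / 4 := by
    have h1 : ε ^ 2 = δ ^ 2 / (4 * (S + 1)) := by
      rw [hε]
      rw [div_pow, mul_pow, Real.sq_sqrt (by linarith)]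
      ring_nf
    rw [h1]
    rw [div_mul_eq_mul_div, div_le_div_iff₀ (by linarith) (by norm_num)]
    nlinarith
  -- apply recurrence with step s = τ + 1
  set s : ℝ := τ + 1 with hs
  obtain ⟨m, hm1, hmrec⟩ := recur N (fun n => -(E n * s)) ε hεpos
  refine ⟨(m : ℝ) * s, ?_, ?_⟩
  · have : (1 : ℝ) ≤ (m : ℝ) := by exact_mod_cast hm1
    nlinarith
  set T : ℝ := (m : ℝ) * s with hT
  -- coordinates of the difference
  have hcoe : ∀ n : ℕ, ((c - timeEvol E T c : lp (fun _ : ℕ => ℂ) 2) : ∀ _ : ℕ, ℂ) n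
      = (1 - Complex.exp ((-(E n * T) : ℝ) * Complex.I)) * (c : ∀ _ : ℕ, ℂ) n := by
    intro n
    simp only [lp.coeFn_sub, Pi.sub_apply, timeEvol]
    rw [sub_mul, one_mul]
  -- rewrite the recurrence conclusion in terms of T
  have hrec' : ∀ n < N, ‖1 - Complex.exp ((-(E n * T) : ℝ) * Complex.I)‖ < ε := by
    intro n hn
    have h2 := hmrec n hn
    rw [norm_sub_rev, show (-(E n * T) : ℝ) = -(E n * s) * m from by rw [hT]; ring]
    exact h2
  -- per-coordinate bounds
  set d : ℕ → ℝ := fun n => ‖((c - timeEvol E T c : lp (fun _ : ℕ => ℂ) 2) : ∀ _ : ℕ, ℂ) n‖ ^ 2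
    with hd
  have hd_le : ∀ n : ℕ, d n ≤ 4 * ‖(c : ∀ _ : ℕ, ℂ) n‖ ^ 2 := by
    intro n
    rw [hd]
    simp only
    rw [hcoe n, norm_mul, mul_pow]
    have hb : ‖1 - Complex.exp ((-(E n * T) : ℝ) * Complex.I)‖ ≤ 2 := by
      calc ‖1 - Complex.exp ((-(E n * T) : ℝ) * Complex.I)‖
          ≤ ‖(1 : ℂ)‖ + ‖Complex.exp ((-(E n * T) : ℝ) * Complex.I)‖ := norm_sub_le _ _
        _ = 2 := by rw [norm_exp_real_mul_I]; norm_num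
    have hsq : ‖1 - Complex.exp ((-(E n * T) : ℝ) * Complex.I)‖ ^ 2 ≤ 4 := by
      nlinarith [norm_nonneg (1 - Complex.exp ((-(E n * T) : ℝ) * Complex.I))]
    exact mul_le_mul_of_nonneg_right hsq (sq_nonneg _)
  have hd_small : ∀ n < N, d n ≤ ε ^ 2 * ‖(c : ∀ _ : ℕ, ℂ) n‖ ^ 2 := by
    intro n hn
    rw [hd]
    simp only
    rw [hcoe n, norm_mul, mul_pow]
    have hsq : ‖1 - Complex.exp ((-(E n * T) : ℝ) * Complex.I)‖ ^ 2 ≤ ε ^ 2 :=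
      pow_le_pow_left₀ (norm_nonneg _) (hrec' n hn).le 2
    exact mul_le_mul_of_nonneg_right hsq (sq_nonneg _)
  have hd_nonneg : ∀ n, 0 ≤ d n := fun n => sq_nonneg _
  have hd_summable : Summable d :=
    Summable.of_nonneg_of_le hd_nonneg hd_le (hsum.mul_left 4)
  -- total bound
  have hsplit : ∑' n, d n = (∑ n ∈ Finset.range N, d n) + ∑' n, d (n + N) :=
    (Summable.sum_add_tsum_nat_add N hd_summable).symm
  have hhead : ∑ n ∈ Finset.range N, d n ≤ ε ^ 2 * S := by
    calc ∑ n ∈ Finset.range N, d n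
        ≤ ∑ n ∈ Finset.range N, ε ^ 2 * ‖(c : ∀ _ : ℕ, ℂ) n‖ ^ 2 :=
          Finset.sum_le_sum fun n hn => hd_small n (Finset.mem_range.1 hn)
      _ = ε ^ 2 * ∑ n ∈ Finset.range N, ‖(c : ∀ _ : ℕ, ℂ) n‖ ^ 2 := by
          rw [Finset.mul_sum]
      _ ≤ ε ^ 2 * S := by
          refine mul_le_mul_of_nonneg_left ?_ (sq_nonneg ε)
          exact Summable.sum_le_tsum _ (fun n _ => sq_nonneg _) hsum
  have htail2 : ∑' n, d (n + N) ≤ 4 * ∑' n, ‖(c : ∀ _ : ℕ, ℂ) (n + N)‖ ^ 2 := by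
    rw [← tsum_mul_left]
    exact Summable.tsum_le_tsum (fun n => hd_le (n + N))
      (hd_summable.comp_injective (add_left_injective N))
      ((hsum.comp_injective (add_left_injective N)).mul_left 4)
  have htot : ∑' n, d n < δ ^ 2 := by
    rw [hsplit]
    calc (∑ n ∈ Finset.range N, d n) + ∑' n, d (n + N)
        ≤ ε ^ 2 * S + 4 * ∑' n, ‖(c : ∀ _ : ℕ, ℂ) (n + N)‖ ^ 2 := add_le_add hhead htail2
      _ < δ ^ 2 / 4 + 4 * (δ ^ 2 / 8) := by
          refine add_lt_add_of_le_of_lt hε2 ?_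
          linarith
      _ ≤ δ ^ 2 := by nlinarith
  -- conclude via the ℓ² norm formula
  have hnorm : ‖c - timeEvol E T c‖ ^ (2 : ℝ) = ∑' n, d n := by
    have := lp.norm_rpow_eq_tsum (p := 2)
      (E := fun _ : ℕ => ℂ) (by norm_num) (c - timeEvol E T c)
    rw [ENNReal.toReal_ofNat] at this
    rw [this]
    refine tsum_congr fun n => ?_
    rw [hd]
    simp [Real.rpow_natCast]
  have hnorm2 : ‖c - timeEvol E T c‖ ^ 2 < δ ^ 2 := by
    have : ‖c - timeEvol E T c‖ ^ (2 : ℝ) < δ ^ 2 := hnorm ▸ htot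
    calc ‖c - timeEvol E T c‖ ^ 2
        = ‖c - timeEvol E T c‖ ^ ((2 : ℕ) : ℝ) := by rw [Real.rpow_natCast]
      _ < δ ^ 2 := by exact_mod_cast this
  exact lt_of_pow_lt_pow_left₀ 2 hδ.le hnorm2
end

section
/- Let E : ℕ → ℝ be a sequence of real numbers and for t ∈ ℝ let U_t denote the time-evolution map on ℓ²(ℕ, ℂ) given by (U_t c)ₙ = exp(-i·Eₙ·t)·cₙ. Then for every c ∈ ℓ²(ℕ, ℂ), every t > 0, and every δ > 0, there exists s ≥ 0 such that ‖U_{-t} c - U_s c‖ < δ. That is, backward time evolution applied to any fixed state can be approximated arbitrarily well by forward time evolution. -/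
open scoped ENNReal
open Complex Filter

lemma expI_sub (a b : ℝ) :
    ‖Complex.exp ((a:ℂ) * Complex.I) - Complex.exp ((b:ℂ) * Complex.I)‖
      = ‖Complex.exp (((a - b : ℝ):ℂ) * Complex.I) - 1‖ := by
  have h : Complex.exp ((a:ℂ) * Complex.I) - Complex.exp ((b:ℂ) * Complex.I)
      = Complex.exp ((b:ℂ) * Complex.I) * (Complex.exp (((a - b : ℝ):ℂ) * Complex.I) - 1) := by
    rw [mul_sub, ← Complex.exp_add, mul_one]
    push_cast
    ring_nf
  rw [h, norm_mul, Complex.norm_exp_ofReal_mul_I, one_mul]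

lemma expI_neg_one (θ : ℝ) : ‖Complex.exp ((-θ : ℝ) * Complex.I) - 1‖ = ‖Complex.exp ((θ:ℝ) * Complex.I) - 1‖ := by
  have := expI_sub 0 θ
  simp only [zero_sub] at this
  rw [← this]
  simp [norm_sub_rev]

lemma timeEvol_apply (E : ℕ → ℝ) (t : ℝ) (c : lp (fun _ : ℕ => ℂ) 2) (n : ℕ) :
    (timeEvol E t c : ∀ _ : ℕ, ℂ) n
      = Complex.exp ((-(E n * t) : ℝ) * Complex.I) * (c : ∀ _ : ℕ, ℂ) n := rfl

lemma lp_norm_sq (f : lp (fun _ : ℕ => ℂ) 2) :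
    ‖f‖ ^ 2 = ∑' n, ‖(f : ∀ _ : ℕ, ℂ) n‖ ^ 2 := by
  have := lp.norm_rpow_eq_tsum (p := 2) (by norm_num) f
  have h2 : (2 : ℝ≥0∞).toReal = ((2:ℕ):ℝ) := by norm_num
  rw [h2] at this
  simpa [Real.rpow_natCast] using this

lemma lp_summable_sq (f : lp (fun _ : ℕ => ℂ) 2) :
    Summable fun n : ℕ => ‖(f : ∀ _ : ℕ, ℂ) n‖ ^ 2 := by
  have := (lp.memℓp f).summable (p := 2) (by norm_num)
  have h2 : (2 : ℝ≥0∞).toReal = ((2:ℕ):ℝ) := by norm_num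
  rw [h2] at this
  simpa [Real.rpow_natCast] using this

set_option maxHeartbeats 1000000 in
/-- backward evolution of a fixed state is approximated by forward
evolution. -/
theorem backward_approx_forward (E : ℕ → ℝ) (c : lp (fun _ : ℕ => ℂ) 2) (t δ : ℝ)
    (ht : 0 < t) (hδ : 0 < δ) :
    ∃ s : ℝ, 0 ≤ s ∧ ‖timeEvol E (-t) c - timeEvol E s c‖ < δ := by
  have hc2 : Summable fun n : ℕ => ‖(c : ∀ _ : ℕ, ℂ) n‖ ^ 2 := lp_summable_sq c
  -- choose N with small tail
  have htail : Tendsto (fun N => ∑' k : ℕ, ‖(c : ∀ _ : ℕ, ℂ) (k + N)‖ ^ 2) atTop (nhds 0) :=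
    tendsto_sum_nat_add (fun n : ℕ => ‖(c : ∀ _ : ℕ, ℂ) n‖ ^ 2)
  obtain ⟨N, hN⟩ := (htail.eventually (gt_mem_nhds (show (0:ℝ) < δ^2/8 by positivity))).exists
  -- choose ε
  set ε : ℝ := δ / (2 * (‖c‖ + 1)) with hε_def
  have hcnorm : (0:ℝ) < ‖c‖ + 1 := by positivity
  have hε : 0 < ε := by positivity
  -- the orbit on the finite torus
  set F : ℕ → (Fin N → ℂ) := fun k n => Complex.exp ((-(E n * (k * t)) : ℝ) * Complex.I) with hF
  have hFmem : ∀ k, F k ∈ Metric.closedBall (0 : Fin N → ℂ) 1 := by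
    intro k
    rw [Metric.mem_closedBall, dist_zero_right]
    refine (pi_norm_le_iff_of_nonneg zero_le_one).2 fun n => le_of_eq ?_
    show ‖Complex.exp (((-(E n * (k * t)) : ℝ):ℂ) * Complex.I)‖ = 1
    rw [Complex.norm_exp_ofReal_mul_I]
  obtain ⟨x, -, φ, hφ, hconv⟩ :=
    (isCompact_closedBall (0 : Fin N → ℂ) 1).tendsto_subseq hFmem
  rw [Metric.tendsto_atTop] at hconv
  obtain ⟨K, hK⟩ := hconv (ε/2) (by positivity)
  set k := φ K with hk
  set m := φ (K + 1) with hm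
  have hkm : k < m := hφ (Nat.lt_succ_self K)
  have hdist : dist (F m) (F k) < ε := by
    calc dist (F m) (F k) ≤ dist (F m) x + dist (F k) x := dist_triangle_right _ _ _
    _ < ε/2 + ε/2 := add_lt_add (hK (K+1) (Nat.le_succ K)) (hK K le_rfl)
    _ = ε := by ring
  -- the forward time
  refine ⟨((m - k - 1 : ℕ) : ℝ) * t, by positivity, ?_⟩
  have hst : ((m - k - 1 : ℕ) : ℝ) * t + t = ((m - k : ℕ) : ℝ) * t := by
    have h1 : (m - k - 1 : ℕ) + 1 = m - k := by omega
    have := congrArg (fun j : ℕ => ((j : ℝ)) * t) h1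
    push_cast at this ⊢
    linarith [this]
  set s : ℝ := ((m - k - 1 : ℕ) : ℝ) * t with hs_def
  set d := timeEvol E (-t) c - timeEvol E s c with hd
  -- pointwise value of d
  have hdn : ∀ n : ℕ, ‖(d : ∀ _ : ℕ, ℂ) n‖
      = ‖Complex.exp (((E n * (t + s) : ℝ) : ℂ) * Complex.I) - 1‖ * ‖(c : ∀ _ : ℕ, ℂ) n‖ := by
    intro n
    have : (d : ∀ _ : ℕ, ℂ) n
        = (Complex.exp (((E n * t : ℝ):ℂ) * Complex.I)
            - Complex.exp (((-(E n * s) : ℝ):ℂ) * Complex.I)) * (c : ∀ _ : ℕ, ℂ) n := by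
      rw [hd, lp.coeFn_sub, Pi.sub_apply, timeEvol_apply, timeEvol_apply]
      push_cast
      ring
    rw [this, norm_mul, expI_sub]
    congr 3
    push_cast
    ring
  -- pointwise bounds
  have hbound2 : ∀ n : ℕ, ‖(d : ∀ _ : ℕ, ℂ) n‖ ≤ 2 * ‖(c : ∀ _ : ℕ, ℂ) n‖ := by
    intro n
    rw [hdn n]
    gcongr
    calc ‖Complex.exp (((E n * (t + s) : ℝ) : ℂ) * Complex.I) - 1‖
        ≤ ‖Complex.exp (((E n * (t + s) : ℝ) : ℂ) * Complex.I)‖ + ‖(1:ℂ)‖ := norm_sub_le _ _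
    _ ≤ 2 := by
        have h1 : ‖Complex.exp (((E n * (t + s) : ℝ):ℂ) * Complex.I)‖ = 1 := by
          rw [Complex.norm_exp_ofReal_mul_I]
        rw [h1, norm_one]; norm_num
  have hboundε : ∀ n : ℕ, n < N → ‖(d : ∀ _ : ℕ, ℂ) n‖ ≤ ε * ‖(c : ∀ _ : ℕ, ℂ) n‖ := by
    intro n hn
    rw [hdn n]
    gcongr
    -- relate t + s to (m - k) * t
    have harg : E n * (t + s) = E n * ((m - k : ℕ) * t) := by
      rw [hs_def]; rw [← hst]; ring
    rw [harg]
    have hco : dist (F m ⟨n, hn⟩) (F k ⟨n, hn⟩) ≤ dist (F m) (F k) := dist_le_pi_dist _ _ _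
    have hco2 : dist (F m ⟨n, hn⟩) (F k ⟨n, hn⟩)
        = ‖Complex.exp (((-(E n * ((m - k : ℕ) * t)) : ℝ):ℂ) * Complex.I) - 1‖ := by
      have hmk : ((m - k : ℕ) : ℝ) = (m:ℝ) - (k:ℝ) := by
        push_cast [Nat.cast_sub hkm.le]; ring
      have hreal : (-(E n * (m * t)) : ℝ) - (-(E n * (k * t)))
          = -(E n * (((m - k : ℕ) : ℝ) * t)) := by rw [hmk]; ring
      rw [dist_eq_norm, hF]
      simp only
      rw [expI_sub, hreal]
    have := hco2 ▸ (hco.trans_lt hdist).le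
    calc ‖Complex.exp (((E n * ((m - k : ℕ) * t) : ℝ):ℂ) * Complex.I) - 1‖
        = ‖Complex.exp (((-(E n * ((m - k : ℕ) * t)) : ℝ):ℂ) * Complex.I) - 1‖ := (expI_neg_one _).symm
    _ ≤ ε := this
  -- now the norm estimate
  have hd2 : Summable fun n : ℕ => ‖(d : ∀ _ : ℕ, ℂ) n‖ ^ 2 := lp_summable_sq d
  have hsplit := Summable.sum_add_tsum_nat_add N hd2
  have hmain : ‖d‖ ^ 2 < δ ^ 2 := by
    rw [lp_norm_sq d, ← hsplit]
    have hA : ∑ n ∈ Finset.range N, ‖(d : ∀ _ : ℕ, ℂ) n‖ ^ 2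
        ≤ ε ^ 2 * ‖c‖ ^ 2 := by
      calc ∑ n ∈ Finset.range N, ‖(d : ∀ _ : ℕ, ℂ) n‖ ^ 2
          ≤ ∑ n ∈ Finset.range N, ε ^ 2 * ‖(c : ∀ _ : ℕ, ℂ) n‖ ^ 2 := by
            refine Finset.sum_le_sum fun n hn => ?_
            have := hboundε n (Finset.mem_range.1 hn)
            calc ‖(d : ∀ _ : ℕ, ℂ) n‖ ^ 2 ≤ (ε * ‖(c : ∀ _ : ℕ, ℂ) n‖) ^ 2 :=
              pow_le_pow_left₀ (norm_nonneg _) this 2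
            _ = ε ^ 2 * ‖(c : ∀ _ : ℕ, ℂ) n‖ ^ 2 := by ring
      _ = ε ^ 2 * ∑ n ∈ Finset.range N, ‖(c : ∀ _ : ℕ, ℂ) n‖ ^ 2 := by
            rw [Finset.mul_sum]
      _ ≤ ε ^ 2 * ∑' n, ‖(c : ∀ _ : ℕ, ℂ) n‖ ^ 2 := by
            gcongr
            exact Summable.sum_le_tsum _ (fun i _ => by positivity) hc2
      _ = ε ^ 2 * ‖c‖ ^ 2 := by rw [← lp_norm_sq]
    have hB : ∑' k : ℕ, ‖(d : ∀ _ : ℕ, ℂ) (k + N)‖ ^ 2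
        ≤ 4 * ∑' k : ℕ, ‖(c : ∀ _ : ℕ, ℂ) (k + N)‖ ^ 2 := by
      rw [← tsum_mul_left]
      refine Summable.tsum_le_tsum (fun i => ?_) ((summable_nat_add_iff N).2 hd2)
        (((summable_nat_add_iff N).2 hc2).mul_left 4)
      have := hbound2 (i + N)
      calc ‖(d : ∀ _ : ℕ, ℂ) (i + N)‖ ^ 2 ≤ (2 * ‖(c : ∀ _ : ℕ, ℂ) (i + N)‖) ^ 2 :=
        pow_le_pow_left₀ (norm_nonneg _) this 2
      _ = 4 * ‖(c : ∀ _ : ℕ, ℂ) (i + N)‖ ^ 2 := by ring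
    have hεc : ε ^ 2 * ‖c‖ ^ 2 ≤ δ ^ 2 / 4 := by
      have h1 : ‖c‖ ^ 2 ≤ (‖c‖ + 1) ^ 2 :=
        pow_le_pow_left₀ (norm_nonneg _) (by linarith) 2
      have h2 : ε ^ 2 * (‖c‖ + 1) ^ 2 = δ ^ 2 / 4 := by
        rw [hε_def]
        field_simp
        ring
      nlinarith [sq_nonneg ε]
    nlinarith [hN]
  exact lt_of_pow_lt_pow_left₀ 2 hδ.le hmain
end

section
/- (Uniform recurrence under an energy bound.) Let E : ℕ → ℝ be a nondecreasing sequence with Eₙ ≥ 0 for all n and Eₙ → +∞, and for t ∈ ℝ let U_t denote the time-evolution map on ℓ²(ℕ, ℂ) given by (U_t c)ₙ = exp(-i·Eₙ·t)·cₙ. Let M > 0 and let X ⊆ ℓ²(ℕ, ℂ) be any set of states such that every c ∈ X has ‖c‖ = 1 and energy expectation ∑ₙ |cₙ|²·Eₙ < M. Then for every δ > 0 and every τ > 0 there exists a single time T > τ such that ‖c - U_T c‖ < δ for all c ∈ X simultaneously. -/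
open scoped ENNReal

lemma lp_norm_sq_eq (f : lp (fun _ : ℕ => ℂ) 2) : ‖f‖ ^ 2 = ∑' n, ‖f n‖ ^ 2 := by
  have h := lp.norm_rpow_eq_tsum (p := 2) (by norm_num) f
  simpa [Real.rpow_natCast] using h

lemma lp_summable_norm_sq (f : lp (fun _ : ℕ => ℂ) 2) : Summable fun n => ‖f n‖ ^ 2 := by
  have h := (lp.memℓp f).summable (p := 2) (by norm_num)
  simpa [Real.rpow_natCast] using h

lemma recur_aux (E : ℕ → ℝ) (N : ℕ) (τ' ε : ℝ) (hτ' : 0 < τ') (hε : 0 < ε) :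
    ∃ T : ℝ, τ' ≤ T ∧ ∀ n < N, ‖Complex.exp ((-(E n * T) : ℝ) * Complex.I) - 1‖ < ε := by
  set f : ℕ → (Fin N → ℂ) :=
    fun j i => Complex.exp ((-(E i * (j * τ')) : ℝ) * Complex.I) with hf
  have hmem : ∀ j, f j ∈ Metric.closedBall (0 : Fin N → ℂ) 1 := by
    intro j
    rw [Metric.mem_closedBall, dist_zero_right]
    refine (pi_norm_le_iff_of_nonneg zero_le_one).2 fun i => ?_
    simp [hf, Complex.norm_exp]
  obtain ⟨b, -, φ, hφ, htend⟩ :=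
    tendsto_subseq_of_bounded Metric.isBounded_closedBall hmem
  obtain ⟨K, hK⟩ := Metric.cauchySeq_iff'.1 htend.cauchySeq ε hε
  have h1 : dist (f (φ (K + 1))) (f (φ K)) < ε := hK (K + 1) (Nat.le_succ K)
  set j := φ K with hj
  set k := φ (K + 1) with hk
  have hjk : j < k := hφ (Nat.lt_succ_self K)
  set m := k - j with hm
  have hm1 : 1 ≤ m := by omega
  refine ⟨(m : ℝ) * τ', ?_, ?_⟩
  · calc τ' = 1 * τ' := (one_mul _).symm
    _ ≤ (m : ℝ) * τ' := by
        apply mul_le_mul_of_nonneg_right _ hτ'.le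
        exact_mod_cast hm1
  · intro n hn
    have hk' : (k : ℝ) * τ' = (j : ℝ) * τ' + (m : ℝ) * τ' := by
      have : (k : ℝ) = (j : ℝ) + (m : ℝ) := by
        exact_mod_cast congrArg (Nat.cast : ℕ → ℝ) (by omega : k = j + m)
      rw [this]; ring
    have hr : (-(E n * ((k : ℝ) * τ')) : ℝ)
        = (-(E n * ((j : ℝ) * τ')) : ℝ) + (-(E n * ((m : ℝ) * τ')) : ℝ) := by
      rw [hk']; ring
    have key : f k ⟨n, hn⟩
        = f j ⟨n, hn⟩ * Complex.exp (((-(E n * ((m : ℝ) * τ')) : ℝ) : ℂ) * Complex.I) := by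
      simp only [hf]
      rw [← Complex.exp_add, ← add_mul, ← Complex.ofReal_add, ← hr]
    have hnorm1 : ‖f j ⟨n, hn⟩‖ = 1 := by
      simp [hf, Complex.norm_exp]
    calc ‖Complex.exp ((-(E n * ((m : ℝ) * τ')) : ℝ) * Complex.I) - 1‖
        = ‖f j ⟨n, hn⟩‖ * ‖Complex.exp ((-(E n * ((m : ℝ) * τ')) : ℝ) * Complex.I) - 1‖ := by
          rw [hnorm1, one_mul]
      _ = ‖f j ⟨n, hn⟩ * (Complex.exp ((-(E n * ((m : ℝ) * τ')) : ℝ) * Complex.I) - 1)‖ :=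
          (norm_mul _ _).symm
      _ = ‖f k ⟨n, hn⟩ - f j ⟨n, hn⟩‖ := by rw [mul_sub, mul_one, ← key]
      _ ≤ dist (f k) (f j) := by
          rw [dist_eq_norm]; exact norm_le_pi_norm (f k - f j) ⟨n, hn⟩
      _ < ε := h1

set_option maxHeartbeats 1000000 in
/-- uniform recurrence under an energy bound. -/
theorem uniform_recurrence_energy_bound (E : ℕ → ℝ) (hmono : Monotone E)
    (hpos : ∀ n, 0 ≤ E n) (hlim : Filter.Tendsto E Filter.atTop Filter.atTop)
    (M : ℝ) (hM : 0 < M) (X : Set (lp (fun _ : ℕ => ℂ) 2))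
    (hXnorm : ∀ c ∈ X, ‖c‖ = 1)
    (hXsum : ∀ c ∈ X, Summable fun n : ℕ => ‖c n‖ ^ 2 * E n)
    (hXE : ∀ c ∈ X, ∑' n : ℕ, ‖c n‖ ^ 2 * E n < M)
    (δ τ : ℝ) (hδ : 0 < δ) (hτ : 0 < τ) :
    ∃ T : ℝ, T > τ ∧ ∀ c ∈ X, ‖c - timeEvol E T c‖ < δ := by
  set A : ℝ := max 1 (16 * M / δ ^ 2) with hAdef
  have hA1 : (1 : ℝ) ≤ A := le_max_left _ _
  have hA0 : (0 : ℝ) < A := lt_of_lt_of_le one_pos hA1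
  have hAB : 16 * M / δ ^ 2 ≤ A := le_max_right _ _
  obtain ⟨N, hN⟩ : ∃ N : ℕ, ∀ n ≥ N, A ≤ E n :=
    Filter.eventually_atTop.mp (hlim.eventually_ge_atTop A)
  obtain ⟨T, hTτ, hT⟩ := recur_aux E N (τ + 1) (δ / 2) (by linarith) (by linarith)
  refine ⟨T, by linarith, ?_⟩
  intro c hc
  set u := timeEvol E T c with hu
  set e : ℕ → ℂ := fun n => Complex.exp ((-(E n * T) : ℝ) * Complex.I) with he
  have hce : ∀ n, (c - u) n = (1 - e n) * c n := by
    intro n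
    have : (c - u) n = c n - u n := by rw [lp.coeFn_sub]; rfl
    rw [this]
    have hun : u n = e n * c n := rfl
    rw [hun]; ring
  -- coordinatewise squared norms
  have hnorm_coord : ∀ n, ‖(c - u) n‖ ^ 2 = ‖1 - e n‖ ^ 2 * ‖c n‖ ^ 2 := by
    intro n; rw [hce n, norm_mul]; ring
  have hbig : ∀ n, ‖1 - e n‖ ≤ 2 := by
    intro n
    calc ‖1 - e n‖ ≤ ‖(1 : ℂ)‖ + ‖e n‖ := norm_sub_le _ _
      _ = 2 := by simp [he, Complex.norm_exp]; norm_num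
  have hhead : ∀ n < N, ‖1 - e n‖ ≤ δ / 2 := by
    intro n hn
    rw [norm_sub_rev]
    exact (hT n hn).le
  have hsc : Summable fun n => ‖c n‖ ^ 2 := lp_summable_norm_sq c
  have hcsum : ∑' n, ‖c n‖ ^ 2 = 1 := by
    rw [← lp_norm_sq_eq c, hXnorm c hc]; norm_num
  set g : ℕ → ℝ := fun n => ‖1 - e n‖ ^ 2 * ‖c n‖ ^ 2 with hg
  have hg_nonneg : ∀ n, 0 ≤ g n := fun n => by positivity
  have hg_le : ∀ n, g n ≤ 4 * ‖c n‖ ^ 2 := by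
    intro n
    have h2 : ‖1 - e n‖ ^ 2 ≤ 4 := by
      have := hbig n
      nlinarith [norm_nonneg (1 - e n)]
    have h3 : 0 ≤ ‖c n‖ ^ 2 := by positivity
    simp only [hg]
    nlinarith
  have hg_summable : Summable g :=
    Summable.of_nonneg_of_le hg_nonneg hg_le (hsc.mul_left 4)
  -- split
  have hsplit := hg_summable.sum_add_tsum_nat_add N
  -- head bound
  have hhead_bound : ∑ i ∈ Finset.range N, g i ≤ (δ / 2) ^ 2 := by
    calc ∑ i ∈ Finset.range N, g i
        ≤ ∑ i ∈ Finset.range N, (δ / 2) ^ 2 * ‖c i‖ ^ 2 := by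
          apply Finset.sum_le_sum
          intro i hi
          have hi' := Finset.mem_range.mp hi
          have h1 := hhead i hi'
          have : ‖1 - e i‖ ^ 2 ≤ (δ / 2) ^ 2 := by
            have := norm_nonneg (1 - e i); nlinarith
          have hc2 : 0 ≤ ‖c i‖ ^ 2 := by positivity
          simp only [hg]; nlinarith
      _ = (δ / 2) ^ 2 * ∑ i ∈ Finset.range N, ‖c i‖ ^ 2 := by
          rw [Finset.mul_sum]
      _ ≤ (δ / 2) ^ 2 * 1 := by
          apply mul_le_mul_of_nonneg_left _ (by positivity)
          rw [← hcsum]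
          exact Summable.sum_le_tsum _ (fun i _ => by positivity) hsc
      _ = (δ / 2) ^ 2 := mul_one _
  -- tail bound
  have htail_summable : Summable fun n => ‖c (n + N)‖ ^ 2 :=
    (summable_nat_add_iff N).mpr hsc
  have hE_summable : Summable fun n : ℕ => ‖c n‖ ^ 2 * E n := hXsum c hc
  have hE_tail_summable : Summable fun n => ‖c (n + N)‖ ^ 2 * E (n + N) :=
    (summable_nat_add_iff N).mpr hE_summable
  have hEterm_nonneg : ∀ n, 0 ≤ ‖c n‖ ^ 2 * E n := fun n =>
    mul_nonneg (by positivity) (hpos n)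
  have hE_tail_le : ∑' n, ‖c (n + N)‖ ^ 2 * E (n + N) ≤ M := by
    have hsplitE := hE_summable.sum_add_tsum_nat_add N
    have hhd : 0 ≤ ∑ i ∈ Finset.range N, ‖c i‖ ^ 2 * E i :=
      Finset.sum_nonneg fun i _ => hEterm_nonneg i
    have := hXE c hc
    linarith
  have htail_small : ∑' n, ‖c (n + N)‖ ^ 2 ≤ M / A := by
    have h1 : ∑' n, ‖c (n + N)‖ ^ 2
        ≤ ∑' n, (1 / A) * (‖c (n + N)‖ ^ 2 * E (n + N)) := by
      apply Summable.tsum_le_tsum _ htail_summable (hE_tail_summable.mul_left _)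
      intro n
      have hEn : A ≤ E (n + N) := hN (n + N) (Nat.le_add_left N n)
      have hc2 : 0 ≤ ‖c (n + N)‖ ^ 2 := by positivity
      have hkey : A * ‖c (n + N)‖ ^ 2 ≤ ‖c (n + N)‖ ^ 2 * E (n + N) := by nlinarith
      calc ‖c (n + N)‖ ^ 2 = (1 / A) * (A * ‖c (n + N)‖ ^ 2) := by field_simp
        _ ≤ (1 / A) * (‖c (n + N)‖ ^ 2 * E (n + N)) :=
            mul_le_mul_of_nonneg_left hkey (by positivity)
    rw [tsum_mul_left] at h1
    have h2 : (1 / A) * ∑' n, ‖c (n + N)‖ ^ 2 * E (n + N) ≤ (1 / A) * M :=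
      mul_le_mul_of_nonneg_left hE_tail_le (by positivity)
    calc ∑' n, ‖c (n + N)‖ ^ 2 ≤ _ := h1
      _ ≤ (1 / A) * M := h2
      _ = M / A := by ring
  have htail_bound : ∑' n, g (n + N) ≤ δ ^ 2 / 4 := by
    have h1 : ∑' n, g (n + N) ≤ ∑' n, 4 * ‖c (n + N)‖ ^ 2 := by
      apply Summable.tsum_le_tsum (fun n => hg_le (n + N))
        ((summable_nat_add_iff N).mpr hg_summable) (htail_summable.mul_left 4)
    rw [tsum_mul_left] at h1
    have h2 : 4 * ∑' n, ‖c (n + N)‖ ^ 2 ≤ 4 * (M / A) :=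
      mul_le_mul_of_nonneg_left htail_small (by norm_num)
    have hB0 : (0 : ℝ) < 16 * M / δ ^ 2 := by positivity
    have h3 : M / A ≤ M / (16 * M / δ ^ 2) :=
      div_le_div_of_nonneg_left hM.le hB0 hAB
    have h4 : M / (16 * M / δ ^ 2) = δ ^ 2 / 16 := by
      field_simp
    linarith
  -- total
  have htotal : ∑' n, g n ≤ δ ^ 2 / 2 := by
    rw [← hsplit]
    have : (δ / 2) ^ 2 = δ ^ 2 / 4 := by ring
    linarith [hhead_bound, htail_bound]
  have hnormsq : ‖c - u‖ ^ 2 = ∑' n, g n := by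
    rw [lp_norm_sq_eq (c - u)]
    exact tsum_congr hnorm_coord
  have hfinal : ‖c - u‖ ^ 2 < δ ^ 2 := by
    rw [hnormsq]
    nlinarith
  exact lt_of_pow_lt_pow_left₀ 2 hδ.le hfinal
end

section
/- Let E : ℕ → ℝ be a nondecreasing sequence with Eₙ ≥ 0 for all n and Eₙ → +∞, and for t ∈ ℝ let U_t denote the time-evolution map on ℓ²(ℕ, ℂ) given by (U_t c)ₙ = exp(-i·Eₙ·t)·cₙ. Let M > 0 and let X ⊆ ℓ²(ℕ, ℂ) be any set of states such that every c ∈ X has ‖c‖ = 1 and energy expectation ∑ₙ |cₙ|²·Eₙ < M. Then for every t > 0 and every δ > 0 there exists a single s ≥ 0 such that ‖U_{-t} c - U_s c‖ < δ for all c ∈ X simultaneously. -/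
open scoped ENNReal

lemma norm_one_sub_exp_recurrence (E : ℕ → ℝ) (N : ℕ) {t ε : ℝ} (ht : 0 < t) (hε : 0 < ε) :
    ∃ τ : ℝ, t ≤ τ ∧ ∀ n < N, ‖1 - Complex.exp ((-(E n * τ) : ℝ) * Complex.I)‖ < ε := by
  set F : ℕ → (Fin N → ℂ) :=
    fun k n => Complex.exp ((-(E n.1 * (k * t)) : ℝ) * Complex.I) with hFdef
  have hFmem : ∀ k, F k ∈ Metric.closedBall (0 : Fin N → ℂ) 1 := by
    intro k
    rw [Metric.mem_closedBall, dist_zero_right]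
    refine (pi_norm_le_iff_of_nonneg zero_le_one).2 fun n => ?_
    simp [hFdef, Complex.norm_exp]
  obtain ⟨a, -, φ, hφ, hconv⟩ :=
    tendsto_subseq_of_bounded Metric.isBounded_closedBall hFmem
  rw [Metric.tendsto_atTop] at hconv
  obtain ⟨J, hJ⟩ := hconv (ε / 2) (by linarith)
  set k := φ J with hk
  set k' := φ (J + 1) with hk'
  have hkk : k < k' := hφ (lt_add_one J)
  have hdist : dist (F k) (F k') < ε := by
    have h1 : dist ((F ∘ φ) J) a < ε / 2 := hJ J le_rfl
    have h2 : dist ((F ∘ φ) (J + 1)) a < ε / 2 := hJ (J + 1) (by omega)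
    calc dist (F k) (F k') ≤ dist (F k) a + dist (F k') a := dist_triangle_right _ _ _
      _ < ε / 2 + ε / 2 := add_lt_add h1 h2
      _ = ε := by ring
  refine ⟨(k' - k : ℕ) * t, ?_, ?_⟩
  · have h1 : (1 : ℝ) ≤ ((k' - k : ℕ) : ℝ) := by
      have : 1 ≤ k' - k := by omega
      exact_mod_cast this
    nlinarith
  · intro n hn
    have key : F k' ⟨n, hn⟩ = F k ⟨n, hn⟩ *
        Complex.exp ((-(E n * ((k' - k : ℕ) * t)) : ℝ) * Complex.I) := by
      simp only [hFdef, ← Complex.exp_add]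
      congr 1
      push_cast [Nat.cast_sub hkk.le]
      ring
    have h1 : ‖F k ⟨n, hn⟩‖ = 1 := by
      simp [hFdef, Complex.norm_exp]
    have heq : ‖1 - Complex.exp ((-(E n * ((k' - k : ℕ) * t)) : ℝ) * Complex.I)‖
        = ‖F k ⟨n, hn⟩ - F k' ⟨n, hn⟩‖ := by
      rw [key, ← mul_one_sub, norm_mul, h1, one_mul]
    rw [heq]
    calc ‖F k ⟨n, hn⟩ - F k' ⟨n, hn⟩‖ = ‖(F k - F k') ⟨n, hn⟩‖ := by simp
      _ ≤ ‖F k - F k'‖ := norm_le_pi_norm _ _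
      _ = dist (F k) (F k') := by rw [dist_eq_norm]
      _ < ε := hdist

lemma norm_sq_eq_tsum_lp2 (f : lp (fun _ : ℕ => ℂ) 2) :
    ‖f‖ ^ 2 = ∑' n : ℕ, ‖f n‖ ^ 2 := by
  have h := lp.norm_rpow_eq_tsum (p := 2) (by norm_num) f
  have h2 : ((2 : ℝ≥0∞).toReal) = (2 : ℝ) := by norm_num
  rw [h2] at h
  calc ‖f‖ ^ 2 = ‖f‖ ^ (2 : ℝ) := by rw [← Real.rpow_natCast]; norm_num
    _ = ∑' n : ℕ, ‖f n‖ ^ (2 : ℝ) := h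
    _ = ∑' n : ℕ, ‖f n‖ ^ 2 := by
        refine tsum_congr fun n => ?_
        rw [← Real.rpow_natCast]; norm_num

lemma summable_norm_sq_lp2 (f : lp (fun _ : ℕ => ℂ) 2) :
    Summable fun n : ℕ => ‖f n‖ ^ 2 := by
  have hs : Summable fun n : ℕ => ‖f n‖ ^ ((2 : ℝ≥0∞).toReal) :=
    (lp.memℓp f).summable (by norm_num)
  refine hs.congr fun n => ?_
  rw [← Real.rpow_natCast]; norm_num

set_option maxHeartbeats 1000000 in
/-- backward evolution approximated by forward evolution, uniformly
over any set of states with uniformly bounded energy expectation values. -/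
theorem backward_approx_forward_energy_bound (E : ℕ → ℝ) (hmono : Monotone E)
    (hpos : ∀ n, 0 ≤ E n) (hlim : Filter.Tendsto E Filter.atTop Filter.atTop)
    (M : ℝ) (hM : 0 < M) (X : Set (lp (fun _ : ℕ => ℂ) 2))
    (hXnorm : ∀ c ∈ X, ‖c‖ = 1)
    (hXsum : ∀ c ∈ X, Summable fun n : ℕ => ‖c n‖ ^ 2 * E n)
    (hXE : ∀ c ∈ X, ∑' n : ℕ, ‖c n‖ ^ 2 * E n < M)
    (t δ : ℝ) (ht : 0 < t) (hδ : 0 < δ) :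
    ∃ s : ℝ, 0 ≤ s ∧ ∀ c ∈ X, ‖timeEvol E (-t) c - timeEvol E s c‖ < δ := by
  set K : ℝ := 16 * M / δ ^ 2 with hK
  have hKpos : 0 < K := by positivity
  obtain ⟨N, hN⟩ := (hlim.eventually_ge_atTop K).exists_forall_of_atTop
  obtain ⟨τ, hτt, hτ⟩ := norm_one_sub_exp_recurrence E N ht (show (0:ℝ) < δ / 2 by linarith)
  refine ⟨τ - t, by linarith, fun c hc => ?_⟩
  set u := timeEvol E (-t) c with hu
  set v := timeEvol E (τ - t) c with hv
  -- pointwise formula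
  have hpt : ∀ n : ℕ, ‖(u - v) n‖
      = ‖1 - Complex.exp ((-(E n * τ) : ℝ) * Complex.I)‖ * ‖c n‖ := by
    intro n
    have hsub : (u - v) n = u n - v n := by
      exact lp.coeFn_sub u v ▸ rfl
    have hun : u n = Complex.exp ((-(E n * (-t)) : ℝ) * Complex.I) * c n := rfl
    have hvn : v n = Complex.exp ((-(E n * (τ - t)) : ℝ) * Complex.I) * c n := rfl
    have hfac : u n - v n
        = Complex.exp (((E n * t : ℝ)) * Complex.I)
          * (1 - Complex.exp ((-(E n * τ) : ℝ) * Complex.I)) * c n := by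
      rw [hun, hvn, mul_one_sub, ← Complex.exp_add]
      push_cast
      ring_nf
    rw [hsub, hfac, norm_mul, norm_mul]
    have : ‖Complex.exp (((E n * t : ℝ)) * Complex.I)‖ = 1 := by
      simp [Complex.norm_exp]
    rw [this, one_mul]
  set f : ℕ → ℝ := fun n => ‖(u - v) n‖ ^ 2 with hf
  have hc2 : Summable fun n : ℕ => ‖c n‖ ^ 2 := summable_norm_sq_lp2 c
  have hfle : ∀ n, f n ≤ 4 * ‖c n‖ ^ 2 := by
    intro n
    have hb : ‖1 - Complex.exp ((-(E n * τ) : ℝ) * Complex.I)‖ ≤ 2 := by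
      calc ‖1 - Complex.exp ((-(E n * τ) : ℝ) * Complex.I)‖
          ≤ ‖(1 : ℂ)‖ + ‖Complex.exp ((-(E n * τ) : ℝ) * Complex.I)‖ := norm_sub_le _ _
        _ = 2 := by simp [Complex.norm_exp]; norm_num
    have := hpt n
    simp only [hf]
    rw [this, mul_pow]
    have hb2 : ‖1 - Complex.exp ((-(E n * τ) : ℝ) * Complex.I)‖ ^ 2 ≤ 4 := by
      nlinarith [norm_nonneg (1 - Complex.exp ((-(E n * τ) : ℝ) * Complex.I))]
    nlinarith [sq_nonneg ‖(c : ∀ _ : ℕ, ℂ) n‖]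
  have hfsum : Summable f :=
    Summable.of_nonneg_of_le (fun n => sq_nonneg _) hfle (hc2.mul_left 4)
  have hnorm_sq : ‖u - v‖ ^ 2 = ∑' n, f n := norm_sq_eq_tsum_lp2 (u - v)
  -- split
  have hsplit : ∑ n ∈ Finset.range N, f n + ∑' i : ℕ, f (i + N) = ∑' n, f n :=
    Summable.sum_add_tsum_nat_add N hfsum
  -- head bound
  have hcsum1 : ∑' n : ℕ, ‖c n‖ ^ 2 = 1 := by
    rw [← norm_sq_eq_tsum_lp2 c, hXnorm c hc]; norm_num
  have hhead : ∑ n ∈ Finset.range N, f n ≤ (δ / 2) ^ 2 := by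
    calc ∑ n ∈ Finset.range N, f n
        ≤ ∑ n ∈ Finset.range N, (δ / 2) ^ 2 * ‖c n‖ ^ 2 := by
          refine Finset.sum_le_sum fun n hn => ?_
          have h1 := hτ n (Finset.mem_range.1 hn)
          have h2 := hpt n
          simp only [hf]
          rw [h2, mul_pow]
          have hb2 : ‖1 - Complex.exp ((-(E n * τ) : ℝ) * Complex.I)‖ ^ 2 ≤ (δ / 2) ^ 2 := by
            nlinarith [norm_nonneg (1 - Complex.exp ((-(E n * τ) : ℝ) * Complex.I))]
          nlinarith [sq_nonneg ‖(c : ∀ _ : ℕ, ℂ) n‖]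
      _ = (δ / 2) ^ 2 * ∑ n ∈ Finset.range N, ‖c n‖ ^ 2 := by rw [Finset.mul_sum]
      _ ≤ (δ / 2) ^ 2 * ∑' n : ℕ, ‖c n‖ ^ 2 := by
          refine mul_le_mul_of_nonneg_left ?_ (by positivity)
          exact Summable.sum_le_tsum _ (fun n _ => sq_nonneg _) hc2
      _ = (δ / 2) ^ 2 := by rw [hcsum1, mul_one]
  -- tail bound
  have hgsum : Summable fun n : ℕ => ‖c n‖ ^ 2 * E n := hXsum c hc
  have hgtail_sum : Summable fun i : ℕ => ‖c (i + N)‖ ^ 2 * E (i + N) :=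
    (summable_nat_add_iff N).2 hgsum
  have hgtail_le : ∑' i : ℕ, ‖c (i + N)‖ ^ 2 * E (i + N) < M := by
    have hsplit2 := Summable.sum_add_tsum_nat_add N hgsum
    have hheadg : 0 ≤ ∑ n ∈ Finset.range N, ‖c n‖ ^ 2 * E n :=
      Finset.sum_nonneg fun n _ => mul_nonneg (sq_nonneg _) (hpos n)
    have := hXE c hc
    linarith
  have htail : ∑' i : ℕ, f (i + N) ≤ (4 / K) * ∑' i : ℕ, ‖c (i + N)‖ ^ 2 * E (i + N) := by
    rw [← tsum_mul_left]
    refine Summable.tsum_le_tsum (fun i => ?_) ((summable_nat_add_iff N).2 hfsum)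
      (hgtail_sum.mul_left _)
    have hE : K ≤ E (i + N) := hN (i + N) (by omega)
    have h4 : f (i + N) ≤ 4 * ‖c (i + N)‖ ^ 2 := hfle (i + N)
    have hcn : 0 ≤ ‖c (i + N)‖ ^ 2 := sq_nonneg _
    have : 4 * ‖c (i + N)‖ ^ 2 ≤ 4 / K * (‖c (i + N)‖ ^ 2 * E (i + N)) := by
      rw [div_mul_eq_mul_div, le_div_iff₀ hKpos]
      nlinarith
    linarith
  have htail2 : ∑' i : ℕ, f (i + N) < δ ^ 2 / 4 := by
    have h1 : (4 / K) * ∑' i : ℕ, ‖c (i + N)‖ ^ 2 * E (i + N) < (4 / K) * M := by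
      exact mul_lt_mul_of_pos_left hgtail_le (div_pos (by norm_num) hKpos)
    have h2 : (4 / K) * M = δ ^ 2 / 4 := by
      rw [hK]; field_simp; ring
    linarith
  have hfinal : ‖u - v‖ ^ 2 < δ ^ 2 := by
    rw [hnorm_sq, ← hsplit]
    nlinarith
  nlinarith [norm_nonneg (u - v)]
end
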